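/- Let v1, v2, v3, v4 be affinely independent points of ℝ³ and let p ∈ ℝ³. Then p lies in the (topological) interior of the convex hull of {v1, v2, v3, v4} if and only if for each i ∈ {1,2,3,4}, p and v_i lie strictly on the same side of the plane through the other three points; that is, p ∈ interior (convexHull ℝ {v1,v2,v3,v4}) ↔ ∀ i, (affineSpan ℝ of the three points other than v_i).SSameSide p v_i. -/

import Mathlib

open AffineSubspace Set Finset

/-- A point is in the affine span of the basis points other than `i` iff its `i`th
barycentric coordinate vanishes. -/
lemma memSpanComplIffCoordZero {ι : Type*} [Fintype ι] [DecidableEq ι]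
    {V : Type*} [AddCommGroup V] [Module ℝ V]
    (b : AffineBasis ι ℝ V) (i : ι) (x : V) :
    x ∈ affineSpan ℝ (b '' ({i}ᶜ : Set ι)) ↔ b.coord i x = 0 := by
  classical
  have hrange : (b '' ({i}ᶜ : Set ι)) =
      Set.range (b ∘ (Function.Embedding.subtype (fun j : ι => j ∈ ({i}ᶜ : Set ι)))) := by
    rw [Set.range_comp, Function.Embedding.coe_subtype, Subtype.range_coe]
  constructor
  · intro hx
    rw [hrange] at hx
    obtain ⟨t, w, hw, rfl⟩ := eq_affineCombination_of_mem_affineSpan hx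
    set e := Function.Embedding.subtype (fun j : ι => j ∈ ({i}ᶜ : Set ι)) with he
    set W : ι → ℝ := fun j => if hj : j ∈ ({i}ᶜ : Set ι) then w ⟨j, hj⟩ else 0 with hW
    have hcomp : (b ∘ e : _ → V) = b ∘ e := rfl
    have hWe : W ∘ e = w := by
      funext j
      exact dif_pos j.2
    have hmap : (t.map e).affineCombination ℝ b W = t.affineCombination ℝ (b ∘ e) w := by
      rw [Finset.affineCombination_map, hWe]
    rw [← hmap]
    have hWsum : ∑ j ∈ t.map e, W j = 1 := by
      rw [Finset.sum_map]
      calc ∑ j ∈ t, W (e j) = ∑ j ∈ t, w j := by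
            refine Finset.sum_congr rfl fun j _ => ?_
            exact congrFun hWe j
        _ = 1 := hw
    refine AffineBasis.coord_apply_combination_of_notMem _ ?_ hWsum
    intro hi
    rcases Finset.mem_map.mp hi with ⟨j, _, hj⟩
    exact j.2 (by simp [he] at hj; simp [hj])
  · intro hx
    set w : ι → ℝ := fun j => b.coord j x with hwdef
    have hx' : Finset.univ.affineCombination ℝ b w = x := b.affineCombination_coord_eq_self x
    have hsum : ∑ j, w j = 1 := b.sum_coord_apply_eq_one x
    have herase : (Finset.univ.erase i).affineCombination ℝ b w =
        Finset.univ.affineCombination ℝ b w := by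
      rw [Finset.affineCombination_indicator_subset w b (Finset.erase_subset i Finset.univ)]
      congr 1
      funext j
      by_cases hj : j = i
      · subst hj
        simp [Set.indicator_apply, hwdef, hx]
      · simp [Set.indicator_apply, hj]
    have hmapfin : (Finset.univ : Finset {j : ι // j ∈ ({i}ᶜ : Set ι)}).map
        (Function.Embedding.subtype _) = Finset.univ.erase i := by
      ext j
      simp [Finset.mem_map]
    have hsum' : ∑ j ∈ Finset.univ.erase i, w j = 1 := by
      have : ∑ j ∈ Finset.univ.erase i, w j = (∑ j, w j) - w i := by
        rw [← Finset.sum_erase_add Finset.univ w (Finset.mem_univ i)]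
        ring
      rw [this, hsum]
      simp [hwdef, hx]
    have hmem : (Finset.univ.erase i).affineCombination ℝ b w ∈
        affineSpan ℝ (b '' ({i}ᶜ : Set ι)) := by
      rw [hrange, ← hmapfin, Finset.affineCombination_map]
      refine affineCombination_mem_affineSpan ?_ _
      have hs : ∑ j ∈ (Finset.univ : Finset {j : ι // j ∈ ({i}ᶜ : Set ι)}).map
          (Function.Embedding.subtype _), w j = 1 := by rw [hmapfin]; exact hsum'
      rw [Finset.sum_map] at hs
      exact hs
    rw [herase, hx'] at hmem
    exact hmem

/-- Points strictly on the positive side of the zero set of an affine functional. -/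
lemma sSameSideIffPos {V : Type*} [AddCommGroup V] [Module ℝ V]
    (f : V →ᵃ[ℝ] ℝ) (s : AffineSubspace ℝ V) (hm : ∀ z, z ∈ s ↔ f z = 0)
    {q : V} (hq : q ∈ s) {x y : V} (hy : 0 < f y) :
    s.SSameSide x y ↔ 0 < f x := by
  have hfq : f q = 0 := (hm q).mp hq
  have hdiff : ∀ u v : V, f.linear (u -ᵥ v) = f u - f v := fun u v => f.linearMap_vsub u v
  constructor
  · rintro ⟨⟨p₁, hp₁, p₂, hp₂, hr⟩, hxs, hys⟩
    have hr' : SameRay ℝ (f x - f p₁) (f y - f p₂) := by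
      have := hr.map f.linear
      rwa [hdiff, hdiff] at this
    rw [(hm p₁).mp hp₁, (hm p₂).mp hp₂, sub_zero, sub_zero] at hr'
    have hfx : f x ≠ 0 := fun h => hxs ((hm x).mpr h)
    obtain ⟨r₁, r₂, hr₁, hr₂, hr12⟩ := hr'.exists_pos hfx (ne_of_gt hy)
    have : r₁ * f x = r₂ * f y := by simpa [smul_eq_mul] using hr12
    nlinarith
  · intro hx
    have hfx : f x ≠ 0 := ne_of_gt hx
    refine ⟨⟨q, hq, (-((f y / f x) • (x -ᵥ q))) +ᵥ y, ?_, ?_⟩, ?_, ?_⟩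
    · rw [hm]
      have heq : f ((-((f y / f x) • (x -ᵥ q))) +ᵥ y) =
          f.linear (-((f y / f x) • (x -ᵥ q))) +ᵥ f y := AffineMap.map_vadd f y _
      rw [heq, map_neg, map_smul, hdiff, hfq, sub_zero, smul_eq_mul, vadd_eq_add]
      field_simp
      ring
    · have hv : y -ᵥ ((-((f y / f x) • (x -ᵥ q))) +ᵥ y) = (f y / f x) • (x -ᵥ q) := by
        rw [vsub_vadd_eq_vsub_sub, vsub_self, zero_sub, neg_neg]
      rw [hv]
      exact SameRay.sameRay_nonneg_smul_right _ (le_of_lt (div_pos hy hx))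
    · exact fun hxs => hfx ((hm x).mp hxs)
    · exact fun hys => (ne_of_gt hy) ((hm y).mp hys)

lemma sSameSideSpanComplIffCoordPos {ι : Type*} [Fintype ι] [DecidableEq ι] [Nontrivial ι]
    {V : Type*} [AddCommGroup V] [Module ℝ V]
    (b : AffineBasis ι ℝ V) (i : ι) (x : V) :
    (affineSpan ℝ (b '' ({i}ᶜ : Set ι))).SSameSide x (b i) ↔ 0 < b.coord i x := by
  obtain ⟨j, hj⟩ := exists_ne i
  have hq : b j ∈ affineSpan ℝ (b '' ({i}ᶜ : Set ι)) :=
    mem_affineSpan ℝ ⟨j, hj, rfl⟩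
  have hy : (0 : ℝ) < b.coord i (b i) := by rw [b.coord_apply_eq]; norm_num
  exact sSameSideIffPos (b.coord i) _ (memSpanComplIffCoordZero b i) hq hy

/-- A point lies in the interior of the solid tetrahedron on four affinely independent
points of ℝ³ if and only if it lies strictly on the same side as each vertex of the plane
through the other three vertices. -/
theorem mem_interior_tetrahedron_iff_sSameSide
    (v₁ v₂ v₃ v₄ p : EuclideanSpace ℝ (Fin 3))
    (h : AffineIndependent ℝ ![v₁, v₂, v₃, v₄]) :
    p ∈ interior (convexHull ℝ ({v₁, v₂, v₃, v₄} : Set (EuclideanSpace ℝ (Fin 3)))) ↔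
      (affineSpan ℝ ({v₂, v₃, v₄} : Set (EuclideanSpace ℝ (Fin 3)))).SSameSide p v₁ ∧
      (affineSpan ℝ ({v₁, v₃, v₄} : Set (EuclideanSpace ℝ (Fin 3)))).SSameSide p v₂ ∧
      (affineSpan ℝ ({v₁, v₂, v₄} : Set (EuclideanSpace ℝ (Fin 3)))).SSameSide p v₃ ∧
      (affineSpan ℝ ({v₁, v₂, v₃} : Set (EuclideanSpace ℝ (Fin 3)))).SSameSide p v₄ := by
  have htop : affineSpan ℝ (Set.range ![v₁, v₂, v₃, v₄]) = ⊤ := by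
    rw [h.affineSpan_eq_top_iff_card_eq_finrank_add_one]
    simp [finrank_euclideanSpace_fin]
  let b : AffineBasis (Fin 4) ℝ (EuclideanSpace ℝ (Fin 3)) := ⟨![v₁, v₂, v₃, v₄], h, htop⟩
  have hb : ⇑b = ![v₁, v₂, v₃, v₄] := rfl
  have hset : ({v₁, v₂, v₃, v₄} : Set (EuclideanSpace ℝ (Fin 3))) = Set.range b := by
    rw [hb]
    ext x
    simp only [Matrix.range_cons, Matrix.range_empty, Set.union_empty]
    constructor <;> intro hx <;> simp_all <;> tauto
  have h0 : (b '' ({0}ᶜ : Set (Fin 4))) = {v₂, v₃, v₄} := by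
    have : ({0}ᶜ : Set (Fin 4)) = {1, 2, 3} := by
      ext x; fin_cases x <;> simp
    rw [this, hb]
    simp [Set.image_insert_eq]
  have h1 : (b '' ({1}ᶜ : Set (Fin 4))) = {v₁, v₃, v₄} := by
    have : ({1}ᶜ : Set (Fin 4)) = {0, 2, 3} := by
      ext x; fin_cases x <;> simp
    rw [this, hb]
    simp [Set.image_insert_eq]
  have h2 : (b '' ({2}ᶜ : Set (Fin 4))) = {v₁, v₂, v₄} := by
    have : ({2}ᶜ : Set (Fin 4)) = {0, 1, 3} := by
      ext x; fin_cases x <;> simp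
    rw [this, hb]
    simp [Set.image_insert_eq]
  have h3 : (b '' ({3}ᶜ : Set (Fin 4))) = {v₁, v₂, v₃} := by
    have : ({3}ᶜ : Set (Fin 4)) = {0, 1, 2} := by
      ext x; fin_cases x <;> simp
    rw [this, hb]
    simp [Set.image_insert_eq]
  have key : ∀ i : Fin 4,
      (affineSpan ℝ (b '' ({i}ᶜ : Set (Fin 4)))).SSameSide p (b i) ↔ 0 < b.coord i p :=
    fun i => sSameSideSpanComplIffCoordPos b i p
  have k0 := key 0
  have k1 := key 1
  have k2 := key 2
  have k3 := key 3
  rw [h0] at k0; rw [h1] at k1; rw [h2] at k2; rw [h3] at k3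
  have hb0 : b 0 = v₁ := rfl
  have hb1 : b 1 = v₂ := rfl
  have hb2 : b 2 = v₃ := rfl
  have hb3 : b 3 = v₄ := rfl
  rw [hb0] at k0; rw [hb1] at k1; rw [hb2] at k2; rw [hb3] at k3
  rw [hset, b.interior_convexHull]
  constructor
  · intro hp
    exact ⟨k0.mpr (hp 0), k1.mpr (hp 1), k2.mpr (hp 2), k3.mpr (hp 3)⟩
  · rintro ⟨p0, p1, p2, p3⟩ i
    fin_cases i
    · exact k0.mp p0
    · exact k1.mp p1
    · exact k2.mp p2
    · exact k3.mp p3
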